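/- Let (Γ, ψ) be a GBS graph and let d, e ∈ E with d ∉ {e, ē}, ι(d) = u, τ(d) = ι(e) = τ(e) = v (u = v is allowed), such that ψ(d̄) = m, ψ(d) = ℓ1·n, ψ(ē) = n, ψ(e) = ℓ·n for some m, n, ℓ1, ℓ ∈ Z∖{0}, and suppose ℓ1·ℓ2 = ℓ^k for some ℓ2 ∈ Z∖{0} and k ∈ N. Let (Γ′, ψ′) be the GBS graph obtained from (Γ, ψ) by replacing d, e by an edge d′ with ι(d′) = v, τ(d′) = u, ψ′(d̄′) = n, ψ′(d′) = ℓ2·m, and an edge e′ with ι(e′) = τ(e′) = u, ψ′(ē′) = m, ψ′(e′) = ℓ·m, leaving everything else unchanged (a connection move). Then the universal groups F(Γ, ψ) and F(Γ′, ψ′) are isomorphic; explicitly, the assignment fixing all generators other than d′, d̄′, e′, ē′ and sending d′ ↦ e^k·d^{−1} and e′ ↦ d·e·d^{−1} extends to an isomorphism F(Γ′, ψ′) → F(Γ, ψ). -/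

import Mathlib

/-- A GBS graph: a finite graph in the sense of Serre (vertex set `V`, edge set
`E`, fixed-point-free involution `bar`, initial-vertex map `ini`), together with
a labelling of the edges by nonzero integers. -/
structure GBSGraph (V E : Type) : Type where
  bar : E → E
  bar_ne : ∀ e, bar e ≠ e
  bar_invol : ∀ e, bar (bar e) = e
  ini : E → V
  label : E → ℤ
  label_ne : ∀ e, label e ≠ 0

namespace GBSGraph

variable {V E : Type}

/-- Terminal vertex of an edge. -/
def ter (G : GBSGraph V E) (e : E) : V := G.ini (G.bar e)

/-- The defining relators of the universal group `F(Γ, ψ)`: for every edge `e`,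
`ē·e = 1` and `ι(e)^{ψ(ē)}·e·(τ(e)^{ψ(e)})⁻¹·e⁻¹ = 1`. -/
def rels (G : GBSGraph V E) : Set (FreeGroup (V ⊕ E)) :=
  (Set.range fun e : E =>
    FreeGroup.of (Sum.inr (G.bar e)) * FreeGroup.of (Sum.inr e)) ∪
  (Set.range fun e : E =>
    FreeGroup.of (Sum.inl (G.ini e)) ^ G.label (G.bar e) * FreeGroup.of (Sum.inr e) *
      (FreeGroup.of (Sum.inl (G.ter e)) ^ G.label e)⁻¹ * (FreeGroup.of (Sum.inr e))⁻¹)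

end GBSGraph

section Aux

variable {V E : Type}

lemma GBS_mk_eq_one {α : Type*} {rels : Set (FreeGroup α)} {r : FreeGroup α} (hr : r ∈ rels) :
    PresentedGroup.mk rels r = 1 :=
  (QuotientGroup.eq_one_iff r).mpr (Subgroup.subset_normalClosure hr)

lemma GBS_bar_rel (G : GBSGraph V E) (f : E) :
    (PresentedGroup.of (Sum.inr (G.bar f)) : PresentedGroup G.rels) *
      PresentedGroup.of (Sum.inr f) = 1 := by
  have h := GBS_mk_eq_one (Set.mem_union_left _ (Set.mem_range_self f) : _ ∈ G.rels)
  rwa [map_mul] at h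

lemma GBS_of_bar (G : GBSGraph V E) (f : E) :
    (PresentedGroup.of (Sum.inr (G.bar f)) : PresentedGroup G.rels) =
      (PresentedGroup.of (Sum.inr f))⁻¹ :=
  eq_inv_of_mul_eq_one_left (GBS_bar_rel G f)

lemma GBS_vertex_rel (G : GBSGraph V E) (f : E) :
    (PresentedGroup.of (Sum.inl (G.ini f)) : PresentedGroup G.rels) ^ G.label (G.bar f) *
      PresentedGroup.of (Sum.inr f) =
    PresentedGroup.of (Sum.inr f) *
      (PresentedGroup.of (Sum.inl (G.ter f)) : PresentedGroup G.rels) ^ G.label f := by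
  have h := GBS_mk_eq_one (Set.mem_union_right _ (Set.mem_range_self f) : _ ∈ G.rels)
  rw [map_mul, map_mul, map_mul, map_inv, map_inv, map_zpow, map_zpow] at h
  refine mul_inv_eq_one.mp ?_
  rw [mul_inv_rev, ← mul_assoc]
  exact h

lemma GBS_bar_eq_iff (G : GBSGraph V E) {f g : E} : G.bar f = g ↔ f = G.bar g :=
  ⟨fun h => by rw [← h, G.bar_invol], fun h => by rw [h, G.bar_invol]⟩

/-- The generator map implementing a connection move. -/
def connMap [DecidableEq E] (G : GBSGraph V E) (d e : E) (k : ℕ) :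
    V ⊕ E → PresentedGroup G.rels
  | Sum.inl w => PresentedGroup.of (Sum.inl w)
  | Sum.inr f =>
    if f = d then (PresentedGroup.of (Sum.inr e)) ^ k * (PresentedGroup.of (Sum.inr d))⁻¹
    else if f = G.bar d then
      ((PresentedGroup.of (Sum.inr e)) ^ k * (PresentedGroup.of (Sum.inr d))⁻¹)⁻¹
    else if f = e then
      PresentedGroup.of (Sum.inr d) * PresentedGroup.of (Sum.inr e) *
        (PresentedGroup.of (Sum.inr d))⁻¹
    else if f = G.bar e then
      (PresentedGroup.of (Sum.inr d) * PresentedGroup.of (Sum.inr e) *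
        (PresentedGroup.of (Sum.inr d))⁻¹)⁻¹
    else PresentedGroup.of (Sum.inr f)

theorem connection_hom (G : GBSGraph V E) (u v : V) (d e : E)
    (h1 : d ≠ e) (h2 : d ≠ G.bar e)
    (hιd : G.ini d = u) (hτd : G.ter d = v) (hιe : G.ini e = v) (hτe : G.ter e = v)
    (m n ℓ₁ ℓ₂ ℓ : ℤ)
    (hl1 : G.label (G.bar d) = m) (hl2 : G.label d = ℓ₁ * n)
    (hl3 : G.label (G.bar e) = n) (hl4 : G.label e = ℓ * n)
    (k : ℕ) (hk : ℓ₁ * ℓ₂ = ℓ ^ k)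
    (G' : GBSGraph V E) (hbar : G'.bar = G.bar)
    (hι1 : G'.ini d = v) (hι2 : G'.ini (G.bar d) = u)
    (hι3 : G'.ini e = u) (hι4 : G'.ini (G.bar e) = u)
    (hι5 : ∀ f, f ≠ d → f ≠ G.bar d → f ≠ e → f ≠ G.bar e → G'.ini f = G.ini f)
    (hl1' : G'.label (G.bar d) = n) (hl2' : G'.label d = ℓ₂ * m)
    (hl3' : G'.label (G.bar e) = m) (hl4' : G'.label e = ℓ * m)
    (hlab : ∀ f, f ≠ d → f ≠ G.bar d → f ≠ e → f ≠ G.bar e → G'.label f = G.label f) :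
    ∃ φ : PresentedGroup G'.rels →* PresentedGroup G.rels,
      (∀ w : V, φ (PresentedGroup.of (Sum.inl w)) = PresentedGroup.of (Sum.inl w)) ∧
      (∀ f : E, f ≠ d → f ≠ G.bar d → f ≠ e → f ≠ G.bar e →
        φ (PresentedGroup.of (Sum.inr f)) = PresentedGroup.of (Sum.inr f)) ∧
      φ (PresentedGroup.of (Sum.inr d)) =
        PresentedGroup.of (Sum.inr e) ^ k * (PresentedGroup.of (Sum.inr d))⁻¹ ∧
      φ (PresentedGroup.of (Sum.inr e)) =
        PresentedGroup.of (Sum.inr d) * PresentedGroup.of (Sum.inr e) *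
          (PresentedGroup.of (Sum.inr d))⁻¹ := by
  classical
  set U : PresentedGroup G.rels := PresentedGroup.of (Sum.inl u) with hU
  set Vv : PresentedGroup G.rels := PresentedGroup.of (Sum.inl v) with hVv
  set D : PresentedGroup G.rels := PresentedGroup.of (Sum.inr d) with hD0
  set Eg : PresentedGroup G.rels := PresentedGroup.of (Sum.inr e) with hE0
  -- basic conjugation relations
  have hDc : D * Vv ^ (ℓ₁ * n) * D⁻¹ = U ^ m := by
    have h := GBS_vertex_rel G d
    rw [hιd, hτd, hl1, hl2] at h
    exact mul_inv_eq_iff_eq_mul.mpr h.symm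
  have hEc : Eg * Vv ^ (ℓ * n) * Eg⁻¹ = Vv ^ n := by
    have h := GBS_vertex_rel G e
    rw [hιe, hτe, hl3, hl4] at h
    exact mul_inv_eq_iff_eq_mul.mpr h.symm
  have hD : ∀ s : ℤ, D * Vv ^ (ℓ₁ * n * s) * D⁻¹ = U ^ (m * s) := by
    intro s
    rw [zpow_mul Vv (ℓ₁ * n) s, zpow_mul U m s, ← hDc, conj_zpow]
  have hE : ∀ s : ℤ, Eg * Vv ^ (ℓ * n * s) * Eg⁻¹ = Vv ^ (n * s) := by
    intro s
    rw [zpow_mul Vv (ℓ * n) s, zpow_mul Vv n s, ← hEc, conj_zpow]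
  have hDi : ∀ s : ℤ, D⁻¹ * U ^ (m * s) * D = Vv ^ (ℓ₁ * n * s) := by
    intro s; rw [← hD s]; group
  have hEi : ∀ s : ℤ, Eg⁻¹ * Vv ^ (n * s) * Eg = Vv ^ (ℓ * n * s) := by
    intro s; rw [← hE s]; group
  have hEk : ∀ (j : ℕ) (s : ℤ), Eg ^ j * Vv ^ ((ℓ : ℤ) ^ j * (n * s)) * (Eg ^ j)⁻¹ = Vv ^ (n * s) := by
    intro j
    induction j with
    | zero => intro s; simp
    | succ j ih =>
      intro s
      have e1 : (ℓ : ℤ) ^ (j + 1) * (n * s) = ℓ * n * ((ℓ : ℤ) ^ j * s) := by ring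
      have e3 : n * ((ℓ : ℤ) ^ j * s) = (ℓ : ℤ) ^ j * (n * s) := by ring
      have h5 := hE ((ℓ : ℤ) ^ j * s)
      calc Eg ^ (j + 1) * Vv ^ ((ℓ : ℤ) ^ (j + 1) * (n * s)) * (Eg ^ (j + 1))⁻¹
          = Eg ^ j * (Eg * Vv ^ (ℓ * n * ((ℓ : ℤ) ^ j * s)) * Eg⁻¹) * (Eg ^ j)⁻¹ := by
            rw [e1, pow_succ]; group
        _ = Eg ^ j * Vv ^ ((ℓ : ℤ) ^ j * (n * s)) * (Eg ^ j)⁻¹ := by rw [h5, e3]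
        _ = Vv ^ (n * s) := ih s
  have hEki : ∀ s : ℤ, (Eg ^ k)⁻¹ * Vv ^ (n * s) * Eg ^ k = Vv ^ ((ℓ : ℤ) ^ k * (n * s)) := by
    intro s; rw [← hEk k s]; group
  -- inequalities
  have hdd : G.bar d ≠ d := G.bar_ne d
  have hee : G.bar e ≠ e := G.bar_ne e
  have hbd_e : G.bar d ≠ e := fun h => h2 ((GBS_bar_eq_iff G).mp h)
  have hbd_be : G.bar d ≠ G.bar e := fun h => h1 (by
    have := congrArg G.bar h
    rwa [G.bar_invol, G.bar_invol] at this)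
  -- values of connMap
  have Fl : ∀ w : V, connMap G d e k (Sum.inl w) = PresentedGroup.of (Sum.inl w) := fun w => rfl
  have Fd : connMap G d e k (Sum.inr d) = Eg ^ k * D⁻¹ := by
    simp [connMap, hD0, hE0]
  have Fbd : connMap G d e k (Sum.inr (G.bar d)) = (Eg ^ k * D⁻¹)⁻¹ := by
    simp [connMap, hdd, hbd_e, hbd_be, hD0, hE0]
  have Fe : connMap G d e k (Sum.inr e) = D * Eg * D⁻¹ := by
    simp [connMap, h1.symm, hbd_e.symm, hD0, hE0]
  have Fbe : connMap G d e k (Sum.inr (G.bar e)) = (D * Eg * D⁻¹)⁻¹ := by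
    simp [connMap, h2.symm, hbd_be.symm, hee, hD0, hE0]
  have Fo : ∀ f, f ≠ d → f ≠ G.bar d → f ≠ e → f ≠ G.bar e →
      connMap G d e k (Sum.inr f) = PresentedGroup.of (Sum.inr f) := by
    intro f hf1 hf2 hf3 hf4
    simp [connMap, hf1, hf2, hf3, hf4]
  -- relation checking
  have hrel : ∀ r ∈ G'.rels, FreeGroup.lift (connMap G d e k) r = 1 := by
    rintro r (⟨f, rfl⟩ | ⟨f, rfl⟩)
    · -- bar relations
      simp only [map_mul, FreeGroup.lift_apply_of, hbar]
      by_cases hfd : f = d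
      · subst hfd; rw [Fbd, Fd]; exact inv_mul_cancel _
      by_cases hfbd : f = G.bar d
      · subst hfbd; rw [G.bar_invol, Fd, Fbd]; exact mul_inv_cancel _
      by_cases hfe : f = e
      · subst hfe; rw [Fbe, Fe]; exact inv_mul_cancel _
      by_cases hfbe : f = G.bar e
      · subst hfbe; rw [G.bar_invol, Fe, Fbe]; exact mul_inv_cancel _
      · have hb1 : G.bar f ≠ d := fun h => hfbd ((GBS_bar_eq_iff G).mp h)
        have hb2 : G.bar f ≠ G.bar d := fun h => hfd (by
          have := congrArg G.bar h; rwa [G.bar_invol, G.bar_invol] at this)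
        have hb3 : G.bar f ≠ e := fun h => hfbe ((GBS_bar_eq_iff G).mp h)
        have hb4 : G.bar f ≠ G.bar e := fun h => hfe (by
          have := congrArg G.bar h; rwa [G.bar_invol, G.bar_invol] at this)
        rw [Fo _ hb1 hb2 hb3 hb4, Fo _ hfd hfbd hfe hfbe]
        exact GBS_bar_rel G f
    · -- vertex relations
      simp only [map_mul, map_inv, map_zpow, FreeGroup.lift_apply_of, GBSGraph.ter, hbar]
      by_cases hfd : f = d
      · subst hfd
        rw [Fl, Fl, Fd, hι1, hι2, hl1', hl2']
        have key : Eg ^ k * D⁻¹ * U ^ (ℓ₂ * m) * (Eg ^ k * D⁻¹)⁻¹ = Vv ^ n := by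
          have c1 := hDi ℓ₂
          have c2 := hEk k 1
          have e1 : ℓ₂ * m = m * ℓ₂ := mul_comm _ _
          have e2 : ℓ₁ * n * ℓ₂ = (ℓ : ℤ) ^ k * (n * 1) := by
            rw [mul_one]; linear_combination n * hk
          calc Eg ^ k * D⁻¹ * U ^ (ℓ₂ * m) * (Eg ^ k * D⁻¹)⁻¹
              = Eg ^ k * (D⁻¹ * U ^ (m * ℓ₂) * D) * (Eg ^ k)⁻¹ := by rw [e1]; group
            _ = Eg ^ k * Vv ^ ((ℓ : ℤ) ^ k * (n * 1)) * (Eg ^ k)⁻¹ := by rw [c1, e2]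
            _ = Vv ^ n := by rw [c2, mul_one]
        rw [← key, ← hU]; group
      by_cases hfbd : f = G.bar d
      · subst hfbd
        rw [Fl, Fl, Fbd, G.bar_invol, hι1, hι2, hl1', hl2']
        have key : (Eg ^ k * D⁻¹)⁻¹ * Vv ^ n * (Eg ^ k * D⁻¹) = U ^ (ℓ₂ * m) := by
          have c1 := hEki 1
          have c2 := hD ℓ₂
          have e1 : (ℓ : ℤ) ^ k * (n * 1) = ℓ₁ * n * ℓ₂ := by
            rw [mul_one]; linear_combination (-n) * hk
          have e2 : m * ℓ₂ = ℓ₂ * m := mul_comm _ _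
          calc (Eg ^ k * D⁻¹)⁻¹ * Vv ^ n * (Eg ^ k * D⁻¹)
              = D * ((Eg ^ k)⁻¹ * Vv ^ (n * 1) * Eg ^ k) * D⁻¹ := by rw [mul_one]; group
            _ = D * Vv ^ (ℓ₁ * n * ℓ₂) * D⁻¹ := by rw [c1, e1]
            _ = U ^ (ℓ₂ * m) := by rw [c2, e2]
        rw [← key, ← hVv]; group
      by_cases hfe : f = e
      · subst hfe
        rw [Fl, Fl, Fe, hι3, hι4, hl3', hl4']
        have key : (D * Eg * D⁻¹) * U ^ (ℓ * m) * (D * Eg * D⁻¹)⁻¹ = U ^ m := by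
          have c1 := hDi (ℓ * 1)
          have c2 := hE ℓ₁
          have c3 := hD 1
          have e1 : ℓ * m = m * (ℓ * 1) := by ring
          have e2 : ℓ₁ * n * (ℓ * 1) = ℓ * n * ℓ₁ := by ring
          have e3 : n * ℓ₁ = ℓ₁ * n * 1 := by ring
          have e4 : m * 1 = m := by ring
          calc (D * Eg * D⁻¹) * U ^ (ℓ * m) * (D * Eg * D⁻¹)⁻¹
              = D * (Eg * (D⁻¹ * U ^ (m * (ℓ * 1)) * D) * Eg⁻¹) * D⁻¹ := by rw [e1]; group
            _ = D * (Eg * Vv ^ (ℓ * n * ℓ₁) * Eg⁻¹) * D⁻¹ := by rw [c1, e2]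
            _ = D * Vv ^ (ℓ₁ * n * 1) * D⁻¹ := by rw [c2, e3]
            _ = U ^ m := by rw [c3, e4]
        rw [← key, ← hU]; group
      by_cases hfbe : f = G.bar e
      · subst hfbe
        rw [Fl, Fl, Fbe, G.bar_invol, hι3, hι4, hl3', hl4']
        have key : (D * Eg * D⁻¹)⁻¹ * U ^ m * (D * Eg * D⁻¹) = U ^ (ℓ * m) := by
          have c1 := hDi 1
          have c2 := hEi ℓ₁
          have c3 := hD (ℓ * 1)
          have e1 : m = m * 1 := by ring
          have e2 : ℓ₁ * n * 1 = n * ℓ₁ := by ring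
          have e3 : ℓ * n * ℓ₁ = ℓ₁ * n * (ℓ * 1) := by ring
          have e4 : m * (ℓ * 1) = ℓ * m := by ring
          calc (D * Eg * D⁻¹)⁻¹ * U ^ m * (D * Eg * D⁻¹)
              = D * (Eg⁻¹ * (D⁻¹ * U ^ (m * 1) * D) * Eg) * D⁻¹ := by rw [← e1]; group
            _ = D * (Eg⁻¹ * Vv ^ (n * ℓ₁) * Eg) * D⁻¹ := by rw [c1, e2]
            _ = D * Vv ^ (ℓ₁ * n * (ℓ * 1)) * D⁻¹ := by rw [c2, e3]
            _ = U ^ (ℓ * m) := by rw [c3, e4]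
        rw [← key, ← hU]; group
      · have hb1 : G.bar f ≠ d := fun h => hfbd ((GBS_bar_eq_iff G).mp h)
        have hb2 : G.bar f ≠ G.bar d := fun h => hfd (by
          have := congrArg G.bar h; rwa [G.bar_invol, G.bar_invol] at this)
        have hb3 : G.bar f ≠ e := fun h => hfbe ((GBS_bar_eq_iff G).mp h)
        have hb4 : G.bar f ≠ G.bar e := fun h => hfe (by
          have := congrArg G.bar h; rwa [G.bar_invol, G.bar_invol] at this)
        rw [Fl, Fl, Fo _ hfd hfbd hfe hfbe, hι5 _ hfd hfbd hfe hfbe,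
          hι5 _ hb1 hb2 hb3 hb4, hlab _ hfd hfbd hfe hfbe, hlab _ hb1 hb2 hb3 hb4]
        have vr := GBS_vertex_rel G f
        rw [GBSGraph.ter] at vr
        rw [vr]; group
  refine ⟨PresentedGroup.toGroup hrel, fun w => ?_, fun f hf1 hf2 hf3 hf4 => ?_, ?_, ?_⟩
  · rw [PresentedGroup.toGroup.of]; exact Fl w
  · rw [PresentedGroup.toGroup.of]; exact Fo f hf1 hf2 hf3 hf4
  · rw [PresentedGroup.toGroup.of]; exact Fd
  · rw [PresentedGroup.toGroup.of]; exact Fe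

end Aux

/-- A connection move induces an isomorphism of universal groups: if `d ∉ {e, ē}`,
`ι(d) = u`, `τ(d) = ι(e) = τ(e) = v` (`u = v` allowed), `ψ(d̄) = m`, `ψ(d) = ℓ₁·n`,
`ψ(ē) = n`, `ψ(e) = ℓ·n`, `ℓ₁·ℓ₂ = ℓ^k`, and `(Γ', ψ')` is obtained by replacing
`d, e` by an edge `d'` from `v` to `u` with `ψ'(d̄') = n`, `ψ'(d') = ℓ₂·m` and a
loop `e'` at `u` with `ψ'(ē') = m`, `ψ'(e') = ℓ·m` (identifying `d'` with `d` and
`e'` with `e`), then the map fixing all generators other than `d', d̄', e', ē'`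
and sending `d' ↦ e^k·d⁻¹`, `e' ↦ d·e·d⁻¹` extends to an isomorphism
`F(Γ', ψ') → F(Γ, ψ)`. -/
theorem stmt_10 {V E : Type} [Finite V] [Finite E]
    (G : GBSGraph V E) (u v : V) (d e : E)
    (h1 : d ≠ e) (h2 : d ≠ G.bar e)
    (hιd : G.ini d = u) (hτd : G.ter d = v) (hιe : G.ini e = v) (hτe : G.ter e = v)
    (m n ℓ₁ ℓ₂ ℓ : ℤ)
    (hm : m ≠ 0) (hn : n ≠ 0) (hℓ₁ : ℓ₁ ≠ 0) (hℓ₂ : ℓ₂ ≠ 0) (hℓ : ℓ ≠ 0)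
    (hl1 : G.label (G.bar d) = m) (hl2 : G.label d = ℓ₁ * n)
    (hl3 : G.label (G.bar e) = n) (hl4 : G.label e = ℓ * n)
    (k : ℕ) (hk : ℓ₁ * ℓ₂ = ℓ ^ k)
    (G' : GBSGraph V E)
    (hbar : G'.bar = G.bar)
    (hι1 : G'.ini d = v) (hι2 : G'.ini (G.bar d) = u)
    (hι3 : G'.ini e = u) (hι4 : G'.ini (G.bar e) = u)
    (hι5 : ∀ f, f ≠ d → f ≠ G.bar d → f ≠ e → f ≠ G.bar e → G'.ini f = G.ini f)
    (hl1' : G'.label (G.bar d) = n) (hl2' : G'.label d = ℓ₂ * m)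
    (hl3' : G'.label (G.bar e) = m) (hl4' : G'.label e = ℓ * m)
    (hlab : ∀ f, f ≠ d → f ≠ G.bar d → f ≠ e → f ≠ G.bar e →
      G'.label f = G.label f) :
    ∃ φ : PresentedGroup G'.rels ≃* PresentedGroup G.rels,
      (∀ w : V, φ (PresentedGroup.of (Sum.inl w)) = PresentedGroup.of (Sum.inl w)) ∧
      (∀ f : E, f ≠ d → f ≠ G.bar d → f ≠ e → f ≠ G.bar e →
        φ (PresentedGroup.of (Sum.inr f)) = PresentedGroup.of (Sum.inr f)) ∧
      φ (PresentedGroup.of (Sum.inr d)) =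
        PresentedGroup.of (Sum.inr e) ^ k * (PresentedGroup.of (Sum.inr d))⁻¹ ∧
      φ (PresentedGroup.of (Sum.inr e)) =
        PresentedGroup.of (Sum.inr d) * PresentedGroup.of (Sum.inr e) *
          (PresentedGroup.of (Sum.inr d))⁻¹ := by
  obtain ⟨φ, Hφv, Hφo, Hφd, Hφe⟩ :=
    connection_hom G u v d e h1 h2 hιd hτd hιe hτe m n ℓ₁ ℓ₂ ℓ hl1 hl2 hl3 hl4 k hk
      G' hbar hι1 hι2 hι3 hι4 hι5 hl1' hl2' hl3' hl4' hlab
  obtain ⟨ρ, Hρv, Hρo, Hρd, Hρe⟩ :=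
    connection_hom G' v u d e h1 (by rw [hbar]; exact h2)
      hι1 (by rw [GBSGraph.ter, hbar]; exact hι2) hι3 (by rw [GBSGraph.ter, hbar]; exact hι4)
      n m ℓ₂ ℓ₁ ℓ
      (by rw [hbar]; exact hl1') hl2' (by rw [hbar]; exact hl3') hl4'
      k (by rw [mul_comm]; exact hk)
      G hbar.symm
      hιd (by rw [hbar]; exact hτd) hιe (by rw [hbar]; exact hτe)
      (by intro f a b c dd; rw [hbar] at b dd; exact (hι5 f a b c dd).symm)
      (by rw [hbar]; exact hl1) hl2 (by rw [hbar]; exact hl3) hl4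
      (by intro f a b c dd; rw [hbar] at b dd; exact (hlab f a b c dd).symm)
  -- note: ρ's clauses are phrased with G'.bar; convert
  rw [hbar] at Hρo
  have key1 : (φ.comp ρ) (PresentedGroup.of (Sum.inr d)) = PresentedGroup.of (Sum.inr d) := by
    rw [MonoidHom.comp_apply, Hρd, map_mul, map_pow, map_inv, Hφd, Hφe]
    rw [conj_pow]; group
  have key2 : (φ.comp ρ) (PresentedGroup.of (Sum.inr e)) = PresentedGroup.of (Sum.inr e) := by
    rw [MonoidHom.comp_apply, Hρe, map_mul, map_mul, map_inv, Hφd, Hφe]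
    group
  have key1' : (ρ.comp φ) (PresentedGroup.of (Sum.inr d)) = PresentedGroup.of (Sum.inr d) := by
    rw [MonoidHom.comp_apply, Hφd, map_mul, map_pow, map_inv, Hρd, Hρe]
    rw [conj_pow]; group
  have key2' : (ρ.comp φ) (PresentedGroup.of (Sum.inr e)) = PresentedGroup.of (Sum.inr e) := by
    rw [MonoidHom.comp_apply, Hφe, map_mul, map_mul, map_inv, Hρd, Hρe]
    group
  have comp1 : φ.comp ρ = MonoidHom.id _ := by
    refine PresentedGroup.ext fun x => ?_
    rcases x with w | f
    · rw [MonoidHom.comp_apply, Hρv, Hφv, MonoidHom.id_apply]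
    · rw [MonoidHom.id_apply]
      by_cases hfd : f = d
      · subst hfd; exact key1
      by_cases hfbd : f = G.bar d
      · subst hfbd; rw [GBS_of_bar G d, map_inv, key1]
      by_cases hfe : f = e
      · subst hfe; exact key2
      by_cases hfbe : f = G.bar e
      · subst hfbe; rw [GBS_of_bar G e, map_inv, key2]
      · rw [MonoidHom.comp_apply, Hρo f hfd hfbd hfe hfbe, Hφo f hfd hfbd hfe hfbe]
  have comp2 : ρ.comp φ = MonoidHom.id _ := by
    refine PresentedGroup.ext fun x => ?_
    rcases x with w | f
    · rw [MonoidHom.comp_apply, Hφv, Hρv, MonoidHom.id_apply]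
    · rw [MonoidHom.id_apply]
      have obar : ∀ g : E, (PresentedGroup.of (Sum.inr (G.bar g)) : PresentedGroup G'.rels) =
          (PresentedGroup.of (Sum.inr g))⁻¹ := by
        intro g; rw [← hbar]; exact GBS_of_bar G' g
      by_cases hfd : f = d
      · subst hfd; exact key1'
      by_cases hfbd : f = G.bar d
      · subst hfbd; rw [obar d, map_inv, key1']
      by_cases hfe : f = e
      · subst hfe; exact key2'
      by_cases hfbe : f = G.bar e
      · subst hfbe; rw [obar e, map_inv, key2']
      · rw [MonoidHom.comp_apply, Hφo f hfd hfbd hfe hfbe, Hρo f hfd hfbd hfe hfbe]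
  exact ⟨MonoidHom.toMulEquiv φ ρ comp2 comp1, Hφv, Hφo, Hφd, Hφe⟩
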